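/- Let S be a semigroup, σ : S → S an involutive automorphism, and μ a finite linear combination of Dirac measures at central points, given by a finite index set I, constants c_i ∈ ℂ, and elements z_i ∈ Z(S). Suppose f, g : S → ℂ satisfy ∑_{i∈I} c_i f(x y z_i) − ∑_{i∈I} c_i f(σ(y) x z_i) = 2 f(x) g(y) for all x, y ∈ S, with f ≠ 0 and g ≠ 0, and suppose ∑_{i∈I} c_i g(z_i) = 0. Then there exists a constant λ₁ ∈ ℂ \ {0} such that ∑_{i∈I} c_i f(x z_i) = λ₁ f(x) for all x ∈ S. -/

import Mathlib

/-- Lemma: if `(f, g)` solves the Van Vleck–Wilson equation with `f ≠ 0`, `g ≠ 0`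
and `∑ᵢ cᵢ g(zᵢ) = 0`, then there is a nonzero constant `λ₁` with
`∑ᵢ cᵢ f(x zᵢ) = λ₁ f(x)` for all `x`. -/
theorem van_vleck_wilson_eigen {S : Type*} [Semigroup S] (σ : S → S)
    (hσmul : ∀ x y : S, σ (x * y) = σ x * σ y) (hσinv : ∀ x : S, σ (σ x) = x)
    {ι : Type*} [Fintype ι] (c : ι → ℂ) (z : ι → S)
    (hz : ∀ (i : ι) (x : S), x * z i = z i * x)
    (f g : S → ℂ) (hf : f ≠ 0) (hg : g ≠ 0)
    (heq : ∀ x y : S,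
      (∑ i, c i * f (x * y * z i)) - (∑ i, c i * f (σ y * x * z i)) = 2 * f x * g y)
    (hgz : (∑ i, c i * g (z i)) = 0) :
    ∃ lam₁ : ℂ, lam₁ ≠ 0 ∧ ∀ x : S, (∑ i, c i * f (x * z i)) = lam₁ * f x := by
  classical
  -- σ maps central elements to central elements
  have hσz : ∀ (i : ι) (x : S), σ (z i) * x = x * σ (z i) := by
    intro i x
    have h := congrArg σ (hz i (σ x))
    simpa [hσmul, hσinv] using h.symm
  set F : S → ℂ := fun x => ∑ i, c i * f (x * z i) with hFdef
  have hE : ∀ x y : S, F (x * y) - F (σ y * x) = 2 * f x * g y := by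
    intro x y
    simpa [hFdef] using heq x y
  -- Step 3: ∑ⱼ cⱼ F(x σ(zⱼ)) = ∑ⱼ cⱼ F(x zⱼ)
  have h3 : ∀ x : S, (∑ j, c j * F (x * σ (z j))) = ∑ j, c j * F (x * z j) := by
    intro x
    have key : ∑ j, c j * (F (x * z j) - F (σ (z j) * x)) = 0 := by
      calc ∑ j, c j * (F (x * z j) - F (σ (z j) * x))
          = ∑ j, c j * (2 * f x * g (z j)) := by
            refine Finset.sum_congr rfl fun j _ => ?_
            rw [hE x (z j)]
        _ = 2 * f x * ∑ j, c j * g (z j) := by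
            rw [Finset.mul_sum]
            exact Finset.sum_congr rfl fun j _ => by ring
        _ = 0 := by rw [hgz]; ring
    have expand : ∑ j, c j * (F (x * z j) - F (σ (z j) * x))
        = (∑ j, c j * F (x * z j)) - ∑ j, c j * F (x * σ (z j)) := by
      simp_rw [mul_sub, Finset.sum_sub_distrib, hσz]
    rw [expand] at key
    exact (sub_eq_zero.mp key).symm
  -- Step 1: equation with F in place of f on the right-hand side
  have h1 : ∀ x y : S, (∑ j, c j * F (x * y * z j)) - (∑ j, c j * F (σ y * x * z j))
      = 2 * F x * g y := by
    intro x y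
    have step : ∀ j, F (x * y * z j) - F (σ y * x * z j) = 2 * f (x * z j) * g y := by
      intro j
      have h := hE (x * z j) y
      have e1 : x * z j * y = x * y * z j := by
        rw [mul_assoc, mul_assoc, ← hz j y]
      have e2 : σ y * (x * z j) = σ y * x * z j := (mul_assoc _ _ _).symm
      rw [e1, e2] at h
      exact h
    calc (∑ j, c j * F (x * y * z j)) - ∑ j, c j * F (σ y * x * z j)
        = ∑ j, c j * (F (x * y * z j) - F (σ y * x * z j)) := by
          simp_rw [mul_sub, Finset.sum_sub_distrib]
      _ = ∑ j, c j * (2 * f (x * z j) * g y) := by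
          refine Finset.sum_congr rfl fun j _ => ?_
          rw [step j]
      _ = 2 * (∑ j, c j * f (x * z j)) * g y := by
          simp only [Finset.mul_sum, Finset.sum_mul]
          exact Finset.sum_congr rfl fun j _ => by ring
      _ = 2 * F x * g y := rfl
  -- Step 2: same left-hand side equals 2 f(x) G(y)
  have h2 : ∀ x y : S, (∑ j, c j * F (x * y * z j)) - (∑ j, c j * F (σ y * x * z j))
      = 2 * f x * (∑ j, c j * g (y * z j)) := by
    intro x y
    have step : ∀ j, F (x * y * z j) - F (σ y * x * σ (z j)) = 2 * f x * g (y * z j) := by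
      intro j
      have h := hE x (y * z j)
      have e1 : x * (y * z j) = x * y * z j := (mul_assoc _ _ _).symm
      have e2 : σ (y * z j) * x = σ y * x * σ (z j) := by
        rw [hσmul, mul_assoc, hσz j x, ← mul_assoc]
      rw [e1, e2] at h
      exact h
    have sum_step : (∑ j, c j * F (x * y * z j)) - (∑ j, c j * F (σ y * x * σ (z j)))
        = 2 * f x * (∑ j, c j * g (y * z j)) := by
      calc (∑ j, c j * F (x * y * z j)) - ∑ j, c j * F (σ y * x * σ (z j))
          = ∑ j, c j * (F (x * y * z j) - F (σ y * x * σ (z j))) := by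
            simp_rw [mul_sub, Finset.sum_sub_distrib]
        _ = ∑ j, c j * (2 * f x * g (y * z j)) := by
            refine Finset.sum_congr rfl fun j _ => ?_
            rw [step j]
        _ = 2 * f x * (∑ j, c j * g (y * z j)) := by
            rw [Finset.mul_sum]
            exact Finset.sum_congr rfl fun j _ => by ring
    rw [← sum_step, h3 (σ y * x)]
  -- Combine: F(x) g(y) = f(x) G(y)
  have h4 : ∀ x y : S, F x * g y = f x * (∑ j, c j * g (y * z j)) := by
    intro x y
    have := (h1 x y).symm.trans (h2 x y)
    linear_combination this / 2
  obtain ⟨y₀, hy₀⟩ : ∃ y : S, g y ≠ 0 := by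
    by_contra h
    push_neg at h
    exact hg (funext h)
  refine ⟨(∑ j, c j * g (y₀ * z j)) / g y₀, ?_, ?_⟩
  · intro hlam
    have hG : (∑ j, c j * g (y₀ * z j)) = 0 := by
      field_simp at hlam
      rwa [mul_zero] at hlam
    -- then F ≡ 0, contradicting f ≠ 0 and g ≠ 0 via the equation
    have hF0 : ∀ x : S, F x = 0 := by
      intro x
      have h := h4 x y₀
      rw [hG, mul_zero] at h
      exact (mul_eq_zero.mp h).resolve_right hy₀
    obtain ⟨x₀, hx₀⟩ : ∃ x : S, f x ≠ 0 := by
      by_contra h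
      push_neg at h
      exact hf (funext h)
    have h := hE x₀ y₀
    rw [hF0, hF0, sub_zero] at h
    have : (2 : ℂ) * f x₀ * g y₀ ≠ 0 := by
      simp [hx₀, hy₀]
    exact this h.symm
  · intro x
    have h := h4 x y₀
    have : F x = (∑ j, c j * g (y₀ * z j)) / g y₀ * f x := by
      field_simp
      linear_combination h
    simpa [hFdef] using this
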